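/- arXiv:2412.15420 — 7 statements merged into one kernel-verified Lean document; each statement's English description precedes it below -/
import Mathlib

section
/- Define a_k = ∑_{m=0}^{k} 2^m · C(2k−m, m) for k ≥ 0 and b_k = a_k − a_{k−1} for k ≥ 2. Then b_k = 4·b_{k−1} for all k ≥ 3, and consequently b_k = 2^{2k−1} for all k ≥ 2. -/
open Finset

private noncomputable def fJ (n : ℕ) : ℤ :=
  ∑ m ∈ Finset.range (n + 1), 2 ^ m * (Nat.choose (n - m) m : ℤ)

private lemma pascal_aux (n i : ℕ) :
    (Nat.choose (n + 1 - i) (i + 1) : ℤ) =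
      (Nat.choose (n - i) i : ℤ) + (Nat.choose (n - i) (i + 1) : ℤ) := by
  rcases le_or_gt i n with h | h
  · have : n + 1 - i = (n - i) + 1 := by omega
    rw [this, Nat.choose_succ_succ]
    push_cast; ring
  · have h1 : n + 1 - i ≤ i := by omega
    have h2 : n - i = 0 := by omega
    rw [h2, Nat.choose_eq_zero_of_lt (by omega), Nat.choose_eq_zero_of_lt (by omega),
      Nat.choose_eq_zero_of_lt (by omega)]
    simp

private lemma fJ_rec (n : ℕ) : fJ (n + 2) = fJ (n + 1) + 2 * fJ n := by
  have e1 : fJ (n + 2) = (∑ i ∈ range (n + 2),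
      2 ^ (i + 1) * (Nat.choose (n + 1 - i) (i + 1) : ℤ)) + 1 := by
    rw [fJ, Finset.sum_range_succ' (fun m => (2:ℤ) ^ m * (Nat.choose (n + 2 - m) m : ℤ))]
    simp
  rw [e1]
  have e2 : ∀ i ∈ range (n + 2),
      2 ^ (i + 1) * (Nat.choose (n + 1 - i) (i + 1) : ℤ)
        = 2 * (2 ^ i * (Nat.choose (n - i) i : ℤ))
          + 2 ^ (i + 1) * (Nat.choose (n - i) (i + 1) : ℤ) := by
    intro i _
    rw [pascal_aux]; ring
  rw [Finset.sum_congr rfl e2, Finset.sum_add_distrib, ← Finset.mul_sum]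
  have e3 : ∑ i ∈ range (n + 2), 2 ^ i * (Nat.choose (n - i) i : ℤ) = fJ n := by
    rw [fJ, Finset.sum_range_succ]
    simp [Nat.choose_eq_zero_of_lt]
  have e4 : ∑ i ∈ range (n + 2), 2 ^ (i + 1) * (Nat.choose (n - i) (i + 1) : ℤ)
      = fJ (n + 1) - 1 := by
    have hext : (∑ j ∈ range (n + 3), 2 ^ j * (Nat.choose (n + 1 - j) j : ℤ)) = fJ (n + 1) := by
      rw [Finset.sum_range_succ, fJ, Nat.choose_eq_zero_of_lt (by omega)]
      push_cast; ring
    rw [← hext, Finset.sum_range_succ' (fun j => (2:ℤ) ^ j * (Nat.choose (n + 1 - j) j : ℤ))]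
    have hni : ∀ i, n + 1 - (i + 1) = n - i := fun i => by omega
    simp only [hni, Nat.choose_zero_right, pow_zero, Nat.cast_one, mul_one, one_mul]
    ring
  rw [e3, e4]; ring

private lemma fJ_closed (n : ℕ) : 3 * fJ n = 2 ^ (n + 1) + (-1) ^ n := by
  induction n using Nat.twoStepInduction with
  | zero => simp [fJ]
  | one => norm_num [fJ, Finset.sum_range_succ]
  | more n ih1 ih2 =>
    rw [fJ_rec]
    ring_nf
    ring_nf at ih1 ih2
    nlinarith [ih1, ih2]

/-- With `a k = ∑_{m=0}^{k} 2^m C(2k−m, m)` and `b k = a k − a (k−1)`,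
one has `b k = 4 b (k−1)` for `k ≥ 3` and `b k = 2^(2k−1)` for `k ≥ 2`. -/
theorem b_recursion_and_closed_form
    (a : ℕ → ℤ)
    (ha : ∀ k, a k = ∑ m ∈ Finset.range (k + 1), 2 ^ m * (Nat.choose (2 * k - m) m : ℤ))
    (b : ℕ → ℤ)
    (hb : ∀ k, b k = a k - a (k - 1)) :
    (∀ k, 3 ≤ k → b k = 4 * b (k - 1)) ∧ (∀ k, 2 ≤ k → b k = 2 ^ (2 * k - 1)) := by
  have haf : ∀ k, a k = fJ (2 * k) := by
    intro k
    rw [ha, fJ]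
    apply Finset.sum_subset
    · intro x hx; simp at hx ⊢; omega
    · intro x hx hx'
      simp at hx hx'
      rw [Nat.choose_eq_zero_of_lt (by omega)]
      ring
  have h3a : ∀ k, 3 * a k = 2 ^ (2 * k + 1) + 1 := by
    intro k
    rw [haf, fJ_closed]
    simp [pow_mul]
  have hbval : ∀ k, 2 ≤ k → b k = 2 ^ (2 * k - 1) := by
    intro k hk
    have h1 := h3a k
    have h2 := h3a (k - 1)
    have h3 : 3 * b k = 3 * 2 ^ (2 * k - 1) := by
      rw [hb]
      have e1 : 2 * k + 1 = (2 * k - 1) + 2 := by omega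
      have e2 : 2 * (k - 1) + 1 = 2 * k - 1 := by omega
      rw [e2] at h2
      rw [e1, pow_add] at h1
      norm_num at h1
      linarith
    linarith
  refine ⟨?_, hbval⟩
  intro k hk
  rw [hbval k (by omega), hbval (k - 1) (by omega)]
  have : 2 * k - 1 = (2 * (k - 1) - 1) + 2 := by omega
  rw [this, pow_add]
  ring
end

section
/- Define ā_k = ∑_{m=0}^{k} 2^m · C(2k+1−m, m) for k ≥ 0 and b̄_k = ā_k − ā_{k−1} for k ≥ 2. Then b̄_k = 2^{2k} for all k ≥ 2, and hence ā_k = 5 + ∑_{m=2}^{k} 2^{2m} for k ≥ 2. -/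
private def Fb (n : ℕ) : ℤ := ∑ m ∈ Finset.range (n + 1), 2 ^ m * (Nat.choose (n - m) m : ℤ)

private lemma Fb_rec (n : ℕ) : Fb (n + 2) = Fb (n + 1) + 2 * Fb n := by
  have pascal : ∀ i ∈ Finset.range (n + 2),
      ((Nat.choose (n + 1 - i) (i + 1) : ℤ)) =
        (Nat.choose (n - i) i : ℤ) + (Nat.choose (n - i) (i + 1) : ℤ) := by
    intro i hi
    rcases Nat.lt_or_ge i (n + 1) with h | h
    · have h1 : n + 1 - i = (n - i) + 1 := by omega
      rw [h1, Nat.choose_succ_succ]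
      push_cast; ring
    · have : i = n + 1 := by simp at hi; omega
      subst this
      simp [Nat.choose_eq_zero_of_lt]
  have e1 : Fb (n + 2) =
      (∑ i ∈ Finset.range (n + 2), 2 ^ (i + 1) * (Nat.choose (n + 1 - i) (i + 1) : ℤ)) + 1 := by
    unfold Fb
    rw [Finset.sum_range_succ']
    simp
  rw [e1]
  have e2 : ∑ i ∈ Finset.range (n + 2), 2 ^ (i + 1) * (Nat.choose (n + 1 - i) (i + 1) : ℤ)
      = ∑ i ∈ Finset.range (n + 2),
          (2 * (2 ^ i * (Nat.choose (n - i) i : ℤ))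
            + 2 ^ (i + 1) * (Nat.choose (n - i) (i + 1) : ℤ)) := by
    refine Finset.sum_congr rfl fun i hi => ?_
    rw [pascal i hi]; ring
  rw [e2, Finset.sum_add_distrib, ← Finset.mul_sum]
  have e3 : ∑ i ∈ Finset.range (n + 2), 2 ^ i * (Nat.choose (n - i) i : ℤ) = Fb n := by
    unfold Fb
    rw [Finset.sum_range_succ]
    have : n - (n + 1) = 0 := by omega
    simp [this, Nat.choose_eq_zero_of_lt]
  have e4 : (∑ i ∈ Finset.range (n + 2), 2 ^ (i + 1) * (Nat.choose (n - i) (i + 1) : ℤ)) + 1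
      = Fb (n + 1) := by
    unfold Fb
    rw [Finset.sum_range_succ' (fun m => (2:ℤ) ^ m * (Nat.choose (n + 1 - m) m : ℤ)) (n + 1)]
    have h0 : ∀ i, n + 1 - (i + 1) = n - i := fun i => by omega
    simp only [h0]
    rw [Finset.sum_range_succ]
    have : n - (n + 1) = 0 := by omega
    simp [this, Nat.choose_eq_zero_of_lt]
  rw [e3]
  linarith [e4]

private lemma Fb_closed (n : ℕ) : 3 * Fb n = 2 ^ (n + 1) + (-1) ^ n := by
  induction n using Nat.twoStepInduction with
  | zero => simp [Fb]
  | one => decide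
  | more n ih1 ih2 =>
    rw [Fb_rec]
    push_cast
    ring_nf
    ring_nf at ih1 ih2
    nlinarith [ih1, ih2]

/-- With `ā k = ∑_{m=0}^{k} 2^m C(2k+1−m, m)` and `b̄ k = ā k − ā (k−1)`,
one has `b̄ k = 2^(2k)` for `k ≥ 2`, hence `ā k = 5 + ∑_{m=2}^{k} 2^(2m)` for `k ≥ 2`. -/
theorem abar_recursion_and_closed_form
    (abar : ℕ → ℤ)
    (habar : ∀ k, abar k = ∑ m ∈ Finset.range (k + 1), 2 ^ m * (Nat.choose (2 * k + 1 - m) m : ℤ))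
    (bbar : ℕ → ℤ)
    (hbbar : ∀ k, bbar k = abar k - abar (k - 1)) :
    (∀ k, 2 ≤ k → bbar k = 2 ^ (2 * k)) ∧
    (∀ k, 2 ≤ k → abar k = 5 + ∑ m ∈ Finset.Icc 2 k, 2 ^ (2 * m)) := by
  have habarF : ∀ k, abar k = Fb (2 * k + 1) := by
    intro k
    rw [habar k]
    unfold Fb
    apply Finset.sum_subset
    · intro x hx; simp at hx ⊢; omega
    · intro x hx hx2
      simp at hx hx2
      have : 2 * k + 1 - x < x := by omega
      simp [Nat.choose_eq_zero_of_lt this]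
  have hclosed : ∀ k, 3 * abar k = 2 ^ (2 * k + 2) - 1 := by
    intro k
    rw [habarF k, Fb_closed]
    have : (-1 : ℤ) ^ (2 * k + 1) = -1 := by
      rw [pow_succ, pow_mul]; norm_num
    rw [this]; ring
  constructor
  · intro k hk
    obtain ⟨j, rfl⟩ : ∃ j, k = j + 2 := ⟨k - 2, by omega⟩
    have h1 := hclosed (j + 2)
    have h2 := hclosed (j + 1)
    have hsub : j + 2 - 1 = j + 1 := rfl
    have hb := hbbar (j + 2)
    rw [hsub] at hb
    have : 3 * bbar (j + 2) = 3 * 2 ^ (2 * (j + 2)) := by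
      rw [hb]
      have e : 2 * (j + 2) + 2 = (2 * (j + 1) + 2) + 2 := by ring
      have e2 : 2 * (j + 2) = (2 * (j + 1) + 2) := by ring
      rw [mul_sub, h1, h2, e, e2, pow_succ, pow_succ]
      ring
    linarith
  · intro k hk
    have key : 3 * (5 + ∑ m ∈ Finset.Icc 2 k, (2:ℤ) ^ (2 * m)) = 2 ^ (2 * k + 2) - 1 := by
      induction k, hk using Nat.le_induction with
      | base => decide
      | succ n hn ih =>
        rw [Finset.sum_Icc_succ_top (by omega : 2 ≤ n + 1)]
        have e : 2 * (n + 1) + 2 = (2 * n + 2) + 2 := by ring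
        have e2 : 2 * (n + 1) = (2 * n) + 2 := by ring
        rw [e, e2]
        have hp : (2:ℤ) ^ (2 * n + 2 + 2) = 4 * 2 ^ (2 * n + 2) := by ring
        linarith
    have := hclosed k
    linarith
end

section
/- For every integer i ≥ 0, the quantity c_i = ∑_{(m,n): m+n=i, 0 ≤ m ≤ n} 2^{-n} C(n, m) satisfies 1/2 ≤ c_i ≤ 1. -/
open Finset

noncomputable def Sci (i : ℕ) : ℝ :=
  ∑ k ∈ Finset.range (i+1), (1/2:ℝ)^(i-k) * (Nat.choose (i-k) k : ℝ)

lemma Sci_zero : Sci 0 = 1 := by simp [Sci]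

lemma Sci_one : Sci 1 = 1/2 := by
  simp [Sci, Finset.sum_range_succ]

lemma Sci_succ_aux (i : ℕ) :
    Sci (i+1) = (∑ j ∈ range i, (1/2:ℝ)^(i-j) * (Nat.choose (i-j) (j+1) : ℝ)) + (1/2:ℝ)^(i+1) := by
  unfold Sci
  rw [Finset.sum_range_succ']
  congr 1
  · rw [Finset.sum_range_succ]
    have h0 : (1/2:ℝ)^(i+1-(i+1)) * (Nat.choose (i+1-(i+1)) (i+1) : ℝ) = 0 := by simp
    rw [h0, add_zero]
    apply Finset.sum_congr rfl
    intro j hj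
    simp only [Finset.mem_range] at hj
    rw [show i+1-(j+1) = i - j from by omega]
  · simp

lemma Sci_rec (i : ℕ) : Sci (i+2) = (Sci (i+1) + Sci i) / 2 := by
  have key : Sci (i+2) =
      (1/2:ℝ)^(i+2)
      + (∑ j ∈ range i, (1/2:ℝ)^(i+1-j) * (Nat.choose (i-j) j : ℝ))
      + (∑ j ∈ range i, (1/2:ℝ)^(i+1-j) * (Nat.choose (i-j) (j+1) : ℝ))
      + (1/2:ℝ) * (Nat.choose 1 (i+1) : ℝ) := by
    unfold Sci
    rw [show i+2+1 = (i+2)+1 from rfl, Finset.sum_range_succ, Finset.sum_range_succ,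
      Finset.sum_range_succ']
    have hlast : ((1/2:ℝ))^(i+2-(i+2)) * (Nat.choose (i+2-(i+2)) (i+2) : ℝ) = 0 := by
      simp
    have hsnd : ((1/2:ℝ))^(i+2-(i+1)) * (Nat.choose (i+2-(i+1)) (i+1) : ℝ)
        = (1/2:ℝ) * (Nat.choose 1 (i+1) : ℝ) := by
      rw [show i+2-(i+1) = 1 from by omega]
      norm_num
    rw [hlast, hsnd]
    have hmain : ∑ j ∈ range i, (1/2:ℝ)^(i+2-(j+1)) * (Nat.choose (i+2-(j+1)) (j+1) : ℝ)
        = (∑ j ∈ range i, (1/2:ℝ)^(i+1-j) * (Nat.choose (i-j) j : ℝ))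
        + (∑ j ∈ range i, (1/2:ℝ)^(i+1-j) * (Nat.choose (i-j) (j+1) : ℝ)) := by
      rw [← Finset.sum_add_distrib]
      apply Finset.sum_congr rfl
      intro j hj
      simp only [Finset.mem_range] at hj
      rw [show i+2-(j+1) = (i-j)+1 from by omega, show i+1-j = (i-j)+1 from by omega,
        Nat.choose_succ_succ]
      push_cast
      ring
    rw [hmain]
    have h0 : (1/2:ℝ)^(i+2-0) * (Nat.choose (i+2-0) 0 : ℝ) = (1/2:ℝ)^(i+2) := by simp
    rw [h0]
    ring
  have hfst : ∑ j ∈ range i, (1/2:ℝ)^(i+1-j) * (Nat.choose (i-j) j : ℝ)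
      = (1/2) * (Sci i - (Nat.choose 0 i : ℝ)) := by
    have step : ∀ j ∈ range i, (1/2:ℝ)^(i+1-j) * (Nat.choose (i-j) j : ℝ)
        = (1/2) * ((1/2:ℝ)^(i-j) * (Nat.choose (i-j) j : ℝ)) := by
      intro j hj
      simp only [Finset.mem_range] at hj
      rw [show i+1-j = (i-j)+1 from by omega]
      ring
    rw [Finset.sum_congr rfl step, ← Finset.mul_sum]
    unfold Sci
    rw [Finset.sum_range_succ, show i - i = 0 from by omega]
    simp only [pow_zero, one_mul]
    ring
  have hsnd2 : ∑ j ∈ range i, (1/2:ℝ)^(i+1-j) * (Nat.choose (i-j) (j+1) : ℝ)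
      = (1/2) * (Sci (i+1) - (1/2:ℝ)^(i+1)) := by
    have step : ∀ j ∈ range i, (1/2:ℝ)^(i+1-j) * (Nat.choose (i-j) (j+1) : ℝ)
        = (1/2) * ((1/2:ℝ)^(i-j) * (Nat.choose (i-j) (j+1) : ℝ)) := by
      intro j hj
      simp only [Finset.mem_range] at hj
      rw [show i+1-j = (i-j)+1 from by omega]
      ring
    rw [Finset.sum_congr rfl step, ← Finset.mul_sum, Sci_succ_aux]
    ring
  have hcc : (Nat.choose 1 (i+1) : ℝ) = (Nat.choose 0 i : ℝ) := by
    rw [Nat.choose_succ_succ]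
    simp
  rw [key, hfst, hsnd2, hcc]
  ring

lemma Sci_bounds (i : ℕ) : 1/2 ≤ Sci i ∧ Sci i ≤ 1 := by
  have H : ∀ n, (1/2 ≤ Sci n ∧ Sci n ≤ 1) ∧ (1/2 ≤ Sci (n+1) ∧ Sci (n+1) ≤ 1) := by
    intro n
    induction n with
    | zero =>
      refine ⟨⟨?_, ?_⟩, ?_, ?_⟩ <;> norm_num [Sci_zero, show Sci (0+1) = 1/2 from Sci_one]
    | succ m ih =>
      obtain ⟨⟨h1, h2⟩, h3, h4⟩ := ih
      refine ⟨⟨h3, h4⟩, ?_, ?_⟩ <;> rw [Sci_rec] <;> linarith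
  exact (H i).1

lemma filtered_eq_Sci (i : ℕ) :
    ∑ p ∈ (Finset.HasAntidiagonal.antidiagonal i).filter (fun p : ℕ × ℕ => p.1 ≤ p.2),
        (1 / 2 : ℝ) ^ p.2 * (Nat.choose p.2 p.1 : ℝ) = Sci i := by
  rw [Finset.sum_filter, Finset.Nat.sum_antidiagonal_eq_sum_range_succ_mk]
  apply Finset.sum_congr rfl
  intro k hk
  simp only [Finset.mem_range] at hk
  split_ifs with h
  · rfl
  · have hz : Nat.choose (i-k) k = 0 := Nat.choose_eq_zero_of_lt (by omega)
    simp [hz]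

/-- For every `i ≥ 0`, the quantity
`c_i = ∑_{(m,n) : m+n=i, m ≤ n} 2^{-n} C(n,m)` satisfies `1/2 ≤ c_i ≤ 1`. -/
theorem ci_between_half_and_one (i : ℕ) :
    1 / 2 ≤ ∑ p ∈ (Finset.HasAntidiagonal.antidiagonal i).filter (fun p : ℕ × ℕ => p.1 ≤ p.2),
        (1 / 2 : ℝ) ^ p.2 * (Nat.choose p.2 p.1 : ℝ) ∧
    ∑ p ∈ (Finset.HasAntidiagonal.antidiagonal i).filter (fun p : ℕ × ℕ => p.1 ≤ p.2),
        (1 / 2 : ℝ) ^ p.2 * (Nat.choose p.2 p.1 : ℝ) ≤ 1 := by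
  rw [filtered_eq_Sci]
  exact Sci_bounds i
end

section
/- Let (V, μ) be a connected locally finite weighted graph with Green function g(x,y) = ∑_{n≥0} pₙ(x,y), and let ĝ be the Green function of the modified graph (V, μ̂) with μ̂_{xy} = (1/2)μ_{xy} + (1/2)∑_z μ_{xz}μ_{zy}/μ(z). Then (1/2)·g(x,y) ≤ ĝ(x,y) ≤ g(x,y) for all x, y ∈ V. -/
open scoped ENNReal

/-- Vertex weight `μ(x) = ∑_y μ_{xy}` of a weighted graph. -/
noncomputable def vertexWeight {V : Type*} (μ : V → V → ℝ≥0∞) (x : V) : ℝ≥0∞ := ∑' y, μ x y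

/-- Transition kernel `P(x,y) = μ_{xy}/μ(x)` of the random walk. -/
noncomputable def transKer {V : Type*} (μ : V → V → ℝ≥0∞) (x y : V) : ℝ≥0∞ :=
  μ x y / vertexWeight μ x

open Classical in
/-- Transition kernel of the walk killed on exiting `U`. -/
noncomputable def killedKer {V : Type*} (μ : V → V → ℝ≥0∞) (U : Set V) (x y : V) : ℝ≥0∞ :=
  if x ∈ U ∧ y ∈ U then transKer μ x y else 0

open Classical in
/-- `n`-step iterates `P^U_n` of the killed kernel, with `P^U_0 = I_U`. -/
noncomputable def killedKerN {V : Type*} (μ : V → V → ℝ≥0∞) (U : Set V) : ℕ → V → V → ℝ≥0∞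
  | 0 => fun x y => if x = y ∧ x ∈ U then 1 else 0
  | n + 1 => fun x y => ∑' z, killedKer μ U x z * killedKerN μ U n z y

/-- Killed Green function `g^U(x,y) = ∑_n P^U_n(x,y)/μ(y)`. -/
noncomputable def greenKilled {V : Type*} (μ : V → V → ℝ≥0∞) (U : Set V) (x y : V) : ℝ≥0∞ :=
  ∑' n, killedKerN μ U n x y / vertexWeight μ y

/-- Green function `g(x,y) = ∑_n pₙ(x,y)` of the graph. -/
noncomputable def green {V : Type*} (μ : V → V → ℝ≥0∞) (x y : V) : ℝ≥0∞ :=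
  greenKilled μ Set.univ x y

/-- Killed Green operator `G^U f(x) = ∑_{y∈U} g^U(x,y) f(y) μ(y)`. -/
noncomputable def greenOp {V : Type*} (μ : V → V → ℝ≥0∞) (U : Set V) (f : V → ℝ≥0∞) (x : V) :
    ℝ≥0∞ :=
  ∑' y, greenKilled μ U x y * f y * vertexWeight μ y

/-- The `L^q`-Green function `g_q(x,y) = ∑_z g(x,z) g(z,y)^{q-1} μ(z)`. -/
noncomputable def greenQ {V : Type*} (μ : V → V → ℝ≥0∞) (q : ℝ) (x y : V) : ℝ≥0∞ :=
  ∑' z, green μ x z * green μ z y ^ (q - 1) * vertexWeight μ z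

/-- The `μ`-weighted `L^q(U)` norm. -/
noncomputable def lqNorm {V : Type*} (μ : V → V → ℝ≥0∞) (U : Set V) (q : ℝ) (h : V → ℝ≥0∞) :
    ℝ≥0∞ :=
  (∑' x, U.indicator (fun x => h x ^ q * vertexWeight μ x) x) ^ (1 / q)

/-- The `L^p`-capacity `C_p(K,U)`:
`sup { ν(K)^p : ν = fμ, f ∈ ℓ⁺(K), ‖G^U f‖_{L^q(U)} ≤ 1 }`, `1/p + 1/q = 1`. -/
noncomputable def lpCap {V : Type*} (μ : V → V → ℝ≥0∞) (p q : ℝ) (K : Finset V) (U : Set V) :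
    ℝ≥0∞ :=
  ⨆ f ∈ {f : V → ℝ≥0∞ | (∀ x, x ∉ K → f x = 0) ∧ lqNorm μ U q (greenOp μ U f) ≤ 1},
    (∑ x ∈ K, f x * vertexWeight μ x) ^ p

/-- A weighted graph is locally finite if every vertex has finitely many neighbours. -/
def LocallyFinite' {V : Type*} (μ : V → V → ℝ≥0∞) : Prop :=
  ∀ x, (Function.support (μ x)).Finite

namespace GreenModAux

noncomputable def cc : ℕ → ℕ → ℝ≥0∞
  | 0, 0 => 1
  | 0, _+1 => 0
  | _+1, 0 => 0
  | n+1, 1 => cc n 0 / 2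
  | n+1, (m+2) => cc n (m+1) / 2 + cc n m / 2

noncomputable def aa (m : ℕ) : ℝ≥0∞ := ∑' n, cc n m

lemma tsum_shift (f : ℕ → ℝ≥0∞) : ∑' m, f m = f 0 + ∑' m, f (m+1) :=
  tsum_eq_zero_add' ENNReal.summable

lemma aa_zero : aa 0 = 1 := by
  rw [aa, tsum_shift]; simp [cc]

lemma aa_one : aa 1 = 1/2 := by
  rw [aa, tsum_shift]
  simp only [cc, div_eq_mul_inv, ENNReal.tsum_mul_right]
  rw [← aa]; simp [aa_zero, one_div]

lemma aa_rec (m : ℕ) : aa (m+2) = aa (m+1)/2 + aa m/2 := by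
  rw [aa, tsum_shift]
  simp only [cc, ENNReal.tsum_add, div_eq_mul_inv, ENNReal.tsum_mul_right]
  rw [← aa, ← aa]; simp

lemma aa_bounds : ∀ m, 1/2 ≤ aa m ∧ aa m ≤ 1 := by
  intro m
  induction m using Nat.strong_induction_on with
  | _ m ih =>
    match m with
    | 0 => rw [aa_zero]; exact ⟨ENNReal.half_le_self, le_rfl⟩
    | 1 => rw [aa_one]; exact ⟨le_rfl, by norm_num⟩
    | (m+2) =>
      obtain ⟨h1l, h1u⟩ := ih (m+1) (by omega)
      obtain ⟨h2l, h2u⟩ := ih m (by omega)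
      rw [aa_rec]
      constructor
      · calc (1:ℝ≥0∞)/2 = 1/2/2 + 1/2/2 := (ENNReal.add_halves _).symm
          _ ≤ aa (m+1)/2 + aa m/2 :=
            add_le_add (ENNReal.div_le_div_right h1l _) (ENNReal.div_le_div_right h2l _)
      · calc aa (m+1)/2 + aa m/2 ≤ 1/2 + 1/2 :=
            add_le_add (ENNReal.div_le_div_right h1u _) (ENNReal.div_le_div_right h2u _)
          _ = 1 := ENNReal.add_halves 1

section Graph
variable {V : Type*} (μ μh : V → V → ℝ≥0∞)

lemma step1 (m : ℕ) (x y : V) :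
    killedKerN μ Set.univ (m+1) x y = ∑' z, transKer μ x z * killedKerN μ Set.univ m z y := by
  simp [killedKerN, killedKer]

lemma step2 (m : ℕ) (x y : V) :
    killedKerN μ Set.univ (m+2) x y
      = ∑' z, (∑' w, transKer μ x w * transKer μ w z) * killedKerN μ Set.univ m z y := by
  rw [show m+2 = (m+1)+1 from rfl, step1]
  calc ∑' w, transKer μ x w * killedKerN μ Set.univ (m+1) w y
      = ∑' w, ∑' z, transKer μ x w * (transKer μ w z * killedKerN μ Set.univ m z y) := by
        refine tsum_congr fun w => ?_
        rw [step1, ENNReal.tsum_mul_left]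
    _ = ∑' z, ∑' w, transKer μ x w * (transKer μ w z * killedKerN μ Set.univ m z y) :=
        ENNReal.tsum_comm
    _ = ∑' z, (∑' w, transKer μ x w * transKer μ w z) * killedKerN μ Set.univ m z y := by
        refine tsum_congr fun z => ?_
        rw [← ENNReal.tsum_mul_right]
        exact tsum_congr fun w => by ring

variable (hpos : ∀ x, 0 < vertexWeight μ x) (hfin : ∀ x, vertexWeight μ x < ⊤)
  (hμh : ∀ x y, μh x y = μ x y / 2 + (∑' z, μ x z * μ z y / vertexWeight μ z) / 2)

include hpos hfin hμh

lemma vw_hat (x : V) : vertexWeight μh x = vertexWeight μ x := by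
  have key : ∀ z, ∑' y, μ x z * μ z y / vertexWeight μ z = μ x z := by
    intro z
    simp only [div_eq_mul_inv]
    calc ∑' y, μ x z * μ z y * (vertexWeight μ z)⁻¹
        = ∑' y, μ z y * (μ x z * (vertexWeight μ z)⁻¹) := tsum_congr fun y => by ring
      _ = vertexWeight μ z * (μ x z * (vertexWeight μ z)⁻¹) := by
          rw [ENNReal.tsum_mul_right]; rfl
      _ = vertexWeight μ z * (vertexWeight μ z)⁻¹ * μ x z := by ring
      _ = μ x z := by
          rw [ENNReal.mul_inv_cancel (hpos z).ne' (hfin z).ne, one_mul]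
  calc vertexWeight μh x = ∑' y, (μ x y / 2 + (∑' z, μ x z * μ z y / vertexWeight μ z) / 2) :=
        tsum_congr fun y => hμh x y
    _ = (∑' y, μ x y) / 2 + (∑' y, ∑' z, μ x z * μ z y / vertexWeight μ z) / 2 := by
        rw [ENNReal.tsum_add]
        simp only [div_eq_mul_inv, ENNReal.tsum_mul_right]
    _ = vertexWeight μ x / 2 + vertexWeight μ x / 2 := by
        rw [ENNReal.tsum_comm (f := fun y z => μ x z * μ z y / vertexWeight μ z)]
        congr 2
        exact (tsum_congr key).trans rfl
    _ = vertexWeight μ x := ENNReal.add_halves _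

lemma transKer_hat (x y : V) :
    transKer μh x y = transKer μ x y / 2 + (∑' z, transKer μ x z * transKer μ z y) / 2 := by
  unfold transKer
  rw [vw_hat μ μh hpos hfin hμh, hμh]
  simp only [div_eq_mul_inv]
  rw [add_mul]
  have h2 : ∑' z, (μ x z * (vertexWeight μ x)⁻¹) * (μ z y * (vertexWeight μ z)⁻¹)
      = (∑' z, μ x z * μ z y * (vertexWeight μ z)⁻¹) * (vertexWeight μ x)⁻¹ := by
    rw [← ENNReal.tsum_mul_right]
    exact tsum_congr fun z => by ring
  rw [h2]; ring

lemma kerN_hat (n : ℕ) (x y : V) :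
    killedKerN μh Set.univ n x y = ∑' m, cc n m * killedKerN μ Set.univ m x y := by
  induction n generalizing x with
  | zero =>
    rw [tsum_shift]
    simp [cc, killedKerN]
  | succ n IH =>
    have key : killedKerN μh Set.univ (n+1) x y
        = (∑' m, cc n m * killedKerN μ Set.univ (m+1) x y) * 2⁻¹
          + (∑' m, cc n m * killedKerN μ Set.univ (m+2) x y) * 2⁻¹ := by
      rw [step1 μh n x y]
      have e1 : ∀ z, transKer μh x z * killedKerN μh Set.univ n z y
          = transKer μ x z * (∑' m, cc n m * killedKerN μ Set.univ m z y) * 2⁻¹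
            + (∑' w, transKer μ x w * transKer μ w z)
              * (∑' m, cc n m * killedKerN μ Set.univ m z y) * 2⁻¹ := by
        intro z
        rw [transKer_hat μ μh hpos hfin hμh x z, IH]
        simp only [div_eq_mul_inv]
        ring
      rw [tsum_congr e1, ENNReal.tsum_add, ENNReal.tsum_mul_right, ENNReal.tsum_mul_right]
      congr 1
      · congr 1
        calc ∑' z, transKer μ x z * ∑' m, cc n m * killedKerN μ Set.univ m z y
            = ∑' z, ∑' m, cc n m * (transKer μ x z * killedKerN μ Set.univ m z y) := by
              refine tsum_congr fun z => ?_
              rw [← ENNReal.tsum_mul_left]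
              exact tsum_congr fun m => by ring
          _ = ∑' m, ∑' z, cc n m * (transKer μ x z * killedKerN μ Set.univ m z y) :=
              ENNReal.tsum_comm
          _ = ∑' m, cc n m * killedKerN μ Set.univ (m+1) x y := by
              refine tsum_congr fun m => ?_
              rw [ENNReal.tsum_mul_left, ← step1]
      · congr 1
        calc ∑' z, (∑' w, transKer μ x w * transKer μ w z)
                * ∑' m, cc n m * killedKerN μ Set.univ m z y
            = ∑' z, ∑' m, cc n m * ((∑' w, transKer μ x w * transKer μ w z)
                * killedKerN μ Set.univ m z y) := by
              refine tsum_congr fun z => ?_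
              rw [← ENNReal.tsum_mul_left]
              exact tsum_congr fun m => by ring
          _ = ∑' m, ∑' z, cc n m * ((∑' w, transKer μ x w * transKer μ w z)
                * killedKerN μ Set.univ m z y) := ENNReal.tsum_comm
          _ = ∑' m, cc n m * killedKerN μ Set.univ (m+2) x y := by
              refine tsum_congr fun m => ?_
              rw [ENNReal.tsum_mul_left, ← step2]
    rw [key]
    rw [tsum_shift (fun m => cc (n+1) m * killedKerN μ Set.univ m x y)]
    rw [tsum_shift (fun m => cc (n+1) (m+1) * killedKerN μ Set.univ (m+1) x y)]
    rw [tsum_shift (fun m => cc n m * killedKerN μ Set.univ (m+1) x y)]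
    simp only [cc]
    have hK : ∀ m:ℕ, killedKerN μ Set.univ (m+1+1) x y = killedKerN μ Set.univ (m+2) x y :=
      fun m => rfl
    simp only [hK]
    have e2 : ∀ m:ℕ, (cc n (m+1) / 2 + cc n m / 2) * killedKerN μ Set.univ (m+2) x y
        = cc n (m+1) * killedKerN μ Set.univ (m+2) x y * 2⁻¹
          + cc n m * killedKerN μ Set.univ (m+2) x y * 2⁻¹ := by
      intro m; simp only [div_eq_mul_inv]; ring
    rw [tsum_congr e2, ENNReal.tsum_add, ENNReal.tsum_mul_right, ENNReal.tsum_mul_right]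
    simp only [div_eq_mul_inv]
    ring

lemma green_hat (x y : V) :
    green μh x y = ∑' m, aa m * (killedKerN μ Set.univ m x y / vertexWeight μ y) := by
  unfold green greenKilled
  calc ∑' n, killedKerN μh Set.univ n x y / vertexWeight μh y
      = ∑' n, (∑' m, cc n m * killedKerN μ Set.univ m x y) * (vertexWeight μ y)⁻¹ := by
        refine tsum_congr fun n => ?_
        rw [kerN_hat μ μh hpos hfin hμh, vw_hat μ μh hpos hfin hμh, div_eq_mul_inv]
    _ = ∑' n, ∑' m, cc n m * (killedKerN μ Set.univ m x y * (vertexWeight μ y)⁻¹) := by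
        refine tsum_congr fun n => ?_
        rw [← ENNReal.tsum_mul_right]
        exact tsum_congr fun m => by ring
    _ = ∑' m, ∑' n, cc n m * (killedKerN μ Set.univ m x y * (vertexWeight μ y)⁻¹) :=
        ENNReal.tsum_comm
    _ = ∑' m, aa m * (killedKerN μ Set.univ m x y / vertexWeight μ y) := by
        refine tsum_congr fun m => ?_
        rw [ENNReal.tsum_mul_right, aa, div_eq_mul_inv]

end Graph
end GreenModAux

/-- comparison of the Green functions of `(V,μ)` and of the modified graph
`(V,μ̂)` with `μ̂_{xy} = (1/2)μ_{xy} + (1/2)∑_z μ_{xz}μ_{zy}/μ(z)`: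
`(1/2) g(x,y) ≤ ĝ(x,y) ≤ g(x,y)`. -/
theorem green_modified_comparison {V : Type*}
    (μ : V → V → ℝ≥0∞)
    (hsym : ∀ x y, μ x y = μ y x)
    (hloc : LocallyFinite' μ)
    (hpos : ∀ x, 0 < vertexWeight μ x)
    (hfin : ∀ x, vertexWeight μ x < ⊤)
    (hconn : ∀ x y : V, ∃ n, 0 < killedKerN μ Set.univ n x y)
    (μh : V → V → ℝ≥0∞)
    (hμh : ∀ x y, μh x y = μ x y / 2 + (∑' z, μ x z * μ z y / vertexWeight μ z) / 2) :
    ∀ x y, green μ x y / 2 ≤ green μh x y ∧ green μh x y ≤ green μ x y := by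
  intro x y
  have ghat := GreenModAux.green_hat μ μh hpos hfin hμh x y
  have gform : green μ x y = ∑' m, killedKerN μ Set.univ m x y / vertexWeight μ y := rfl
  set q : ℕ → ℝ≥0∞ := fun m => killedKerN μ Set.univ m x y / vertexWeight μ y with hq
  constructor
  · rw [gform, ghat]
    calc (∑' m, q m) / 2 = ∑' m, q m * 2⁻¹ := by
          rw [div_eq_mul_inv, ← ENNReal.tsum_mul_right]
      _ ≤ ∑' m, GreenModAux.aa m * q m := by
          refine ENNReal.tsum_le_tsum fun m => ?_
          rw [mul_comm]
          exact mul_le_mul_left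
            (by simpa [one_div] using (GreenModAux.aa_bounds m).1) (q m)
  · rw [gform, ghat]
    refine ENNReal.tsum_le_tsum fun m => ?_
    calc GreenModAux.aa m * q m ≤ 1 * q m :=
          mul_le_mul_left (GreenModAux.aa_bounds m).2 (q m)
      _ = q m := one_mul _
end

section
/- Let (V, μ) be a connected locally finite weighted graph whose Green function g(x,y) is finite. If g_q(x₀, y₀) < ∞ for one pair (x₀, y₀) ∈ V × V, then g_q(x, y) < ∞ for all pairs (x, y) ∈ V × V, where g_q(x,y) = ∑_{z ∈ V} g(x,z) g(z,y)^{q−1} μ(z) and q > 1. -/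
open scoped ENNReal

section Aux

variable {V : Type*} (μ : V → V → ℝ≥0∞)

open Classical

lemma killedKer_univ (x y : V) : killedKer μ Set.univ x y = transKer μ x y :=
  if_pos ⟨trivial, trivial⟩

lemma kN_zero (x y : V) :
    killedKerN μ Set.univ 0 x y = if x = y then 1 else 0 := by
  simp [killedKerN]

lemma kN_succ (n : ℕ) (x y : V) :
    killedKerN μ Set.univ (n + 1) x y
      = ∑' z, transKer μ x z * killedKerN μ Set.univ n z y := by
  simp [killedKerN, killedKer_univ]

lemma kN_one (x y : V) : killedKerN μ Set.univ 1 x y = transKer μ x y := by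
  rw [kN_succ]
  rw [tsum_eq_single y (fun z hz => by simp [kN_zero, hz])]
  simp [kN_zero]

/-- Chapman–Kolmogorov. -/
lemma kN_CK (n m : ℕ) (x y : V) :
    killedKerN μ Set.univ (n + m) x y
      = ∑' z, killedKerN μ Set.univ n x z * killedKerN μ Set.univ m z y := by
  induction n generalizing x with
  | zero =>
    rw [zero_add, tsum_eq_single x (fun z hz => by simp [kN_zero, (Ne.symm hz)])]
    simp [kN_zero]
  | succ n ih =>
    have : n + 1 + m = (n + m) + 1 := by ring
    rw [this, kN_succ]
    have h1 : ∀ z : V, transKer μ x z * killedKerN μ Set.univ (n + m) z y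
        = ∑' w, transKer μ x z * (killedKerN μ Set.univ n z w * killedKerN μ Set.univ m w y) := by
      intro z; rw [ih, ENNReal.tsum_mul_left]
    calc (∑' z, transKer μ x z * killedKerN μ Set.univ (n + m) z y)
        = ∑' z, ∑' w, transKer μ x z *
            (killedKerN μ Set.univ n z w * killedKerN μ Set.univ m w y) := by
          exact tsum_congr h1
      _ = ∑' w, ∑' z, (transKer μ x z * killedKerN μ Set.univ n z w)
            * killedKerN μ Set.univ m w y := by
          rw [ENNReal.tsum_comm]
          exact tsum_congr fun w => tsum_congr fun z => (mul_assoc _ _ _).symm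
      _ = ∑' w, (∑' z, transKer μ x z * killedKerN μ Set.univ n z w)
            * killedKerN μ Set.univ m w y := by
          exact tsum_congr fun w => ENNReal.tsum_mul_right
      _ = ∑' w, killedKerN μ Set.univ (n + 1) x w * killedKerN μ Set.univ m w y := by
          exact tsum_congr fun w => by rw [kN_succ]

lemma transKer_mul (hsym : ∀ x y, μ x y = μ y x) (hpos : ∀ x, 0 < vertexWeight μ x)
    (hfin : ∀ x, vertexWeight μ x < ⊤) (x y : V) :
    transKer μ x y * vertexWeight μ x = transKer μ y x * vertexWeight μ y := by
  unfold transKer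
  rw [ENNReal.div_mul_cancel (hpos x).ne' (hfin x).ne,
    ENNReal.div_mul_cancel (hpos y).ne' (hfin y).ne, hsym]

/-- Symmetry of the kernel w.r.t. the weight. -/
lemma kN_sym (hsym : ∀ x y, μ x y = μ y x) (hpos : ∀ x, 0 < vertexWeight μ x)
    (hfin : ∀ x, vertexWeight μ x < ⊤) (n : ℕ) (x y : V) :
    killedKerN μ Set.univ n x y * vertexWeight μ x
      = killedKerN μ Set.univ n y x * vertexWeight μ y := by
  induction n generalizing x y with
  | zero =>
    by_cases hxy : x = y
    · subst hxy; rfl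
    · simp [kN_zero, hxy, Ne.symm hxy]
  | succ n ih =>
    have hCK : killedKerN μ Set.univ (n + 1) y x
        = ∑' z, killedKerN μ Set.univ n y z * transKer μ z x := by
      rw [kN_CK μ n 1]
      exact tsum_congr fun z => by rw [kN_one]
    calc killedKerN μ Set.univ (n + 1) x y * vertexWeight μ x
        = ∑' z, (transKer μ x z * vertexWeight μ x) * killedKerN μ Set.univ n z y := by
          rw [kN_succ, ← ENNReal.tsum_mul_right]
          exact tsum_congr fun z => by ring
      _ = ∑' z, transKer μ z x * (killedKerN μ Set.univ n z y * vertexWeight μ z) := by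
          exact tsum_congr fun z => by rw [transKer_mul μ hsym hpos hfin]; ring
      _ = ∑' z, (killedKerN μ Set.univ n y z * transKer μ z x) * vertexWeight μ y := by
          exact tsum_congr fun z => by rw [ih]; ring
      _ = killedKerN μ Set.univ (n + 1) y x * vertexWeight μ y := by
          rw [ENNReal.tsum_mul_right, hCK]

lemma green_eq (x y : V) :
    green μ x y = ∑' n, killedKerN μ Set.univ n x y / vertexWeight μ y := rfl

/-- `g(x,y) ≥ Pₙ(x,w) g(w,y)`. -/
lemma kN_mul_green_le (n : ℕ) (x w y : V) :
    killedKerN μ Set.univ n x w * green μ w y ≤ green μ x y := by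
  rw [green_eq, green_eq, ← ENNReal.tsum_mul_left]
  calc (∑' m, killedKerN μ Set.univ n x w
        * (killedKerN μ Set.univ m w y / vertexWeight μ y))
      ≤ ∑' m, killedKerN μ Set.univ (n + m) x y / vertexWeight μ y := by
        refine ENNReal.tsum_le_tsum fun m => ?_
        rw [div_eq_mul_inv, div_eq_mul_inv, ← mul_assoc]
        refine mul_le_mul_left ?_ _
        rw [kN_CK]
        exact ENNReal.le_tsum w
    _ ≤ ∑' k, killedKerN μ Set.univ k x y / vertexWeight μ y :=
        ENNReal.tsum_comp_le_tsum_of_injective (add_right_injective n) _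

/-- Symmetry of the Green function. -/
lemma green_symm (hsym : ∀ x y, μ x y = μ y x) (hpos : ∀ x, 0 < vertexWeight μ x)
    (hfin : ∀ x, vertexWeight μ x < ⊤) (x y : V) :
    green μ x y = green μ y x := by
  rw [green_eq, green_eq]
  refine tsum_congr fun n => ?_
  have h := kN_sym μ hsym hpos hfin n x y
  calc killedKerN μ Set.univ n x y / vertexWeight μ y
      = killedKerN μ Set.univ n x y * vertexWeight μ x
          / (vertexWeight μ y * vertexWeight μ x) := by
        rw [ENNReal.mul_div_mul_right _ _ (hpos x).ne' (hfin x).ne]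
    _ = killedKerN μ Set.univ n y x * vertexWeight μ y
          / (vertexWeight μ x * vertexWeight μ y) := by rw [h, mul_comm (vertexWeight μ y)]
    _ = killedKerN μ Set.univ n y x / vertexWeight μ x := by
        rw [ENNReal.mul_div_mul_right _ _ (hpos y).ne' (hfin y).ne]

end Aux

/-- if the Green function is finite and `g_q(x₀,y₀) < ∞` for one pair,
then `g_q(x,y) < ∞` for all pairs. Connectedness is expressed by the positivity of
some `n`-step transition probability between any two vertices. -/
theorem greenQ_finite_everywhere {V : Type*}
    (μ : V → V → ℝ≥0∞)
    (hsym : ∀ x y, μ x y = μ y x)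
    (hloc : LocallyFinite' μ)
    (hpos : ∀ x, 0 < vertexWeight μ x)
    (hfin : ∀ x, vertexWeight μ x < ⊤)
    (hconn : ∀ x y : V, ∃ n, 0 < killedKerN μ Set.univ n x y)
    (hgfin : ∀ x y, green μ x y < ⊤)
    (q : ℝ) (hq : 1 < q)
    (x₀ y₀ : V) (h : greenQ μ q x₀ y₀ < ⊤) :
    ∀ x y, greenQ μ q x y < ⊤ := by
  intro x y
  obtain ⟨n, hn⟩ := hconn x₀ x
  obtain ⟨m, hm⟩ := hconn y₀ y
  set Kn := killedKerN μ Set.univ n x₀ x with hKn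
  set Km := killedKerN μ Set.univ m y₀ y with hKm
  have hq1 : (0 : ℝ) ≤ q - 1 := by linarith
  have key : Kn * Km ^ (q - 1) * greenQ μ q x y ≤ greenQ μ q x₀ y₀ := by
    unfold greenQ
    rw [← ENNReal.tsum_mul_left]
    refine ENNReal.tsum_le_tsum fun z => ?_
    have h1 : Kn * green μ x z ≤ green μ x₀ z := kN_mul_green_le μ n x₀ x z
    have h2 : (Km * green μ z y) ^ (q - 1) ≤ green μ z y₀ ^ (q - 1) := by
      refine ENNReal.rpow_le_rpow ?_ hq1
      rw [green_symm μ hsym hpos hfin z y, green_symm μ hsym hpos hfin z y₀]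
      exact kN_mul_green_le μ m y₀ y z
    calc Kn * Km ^ (q - 1) * (green μ x z * green μ z y ^ (q - 1) * vertexWeight μ z)
        = (Kn * green μ x z) * (Km * green μ z y) ^ (q - 1) * vertexWeight μ z := by
          rw [ENNReal.mul_rpow_of_nonneg _ _ hq1]; ring
      _ ≤ green μ x₀ z * green μ z y₀ ^ (q - 1) * vertexWeight μ z :=
          mul_le_mul_left (mul_le_mul' h1 h2) _
  have hc0 : Kn * Km ^ (q - 1) ≠ 0 := by
    refine mul_ne_zero hn.ne' ?_
    rw [Ne, ENNReal.rpow_eq_zero_iff]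
    push_neg
    exact ⟨fun h0 => absurd h0 hm.ne', fun _ => by linarith⟩
  by_contra hc
  rw [not_lt, top_le_iff] at hc
  rw [hc, ENNReal.mul_top hc0] at key
  exact absurd (top_le_iff.mp key) h.ne
end

section
/- Let {Uₙ} be an increasing exhaustion of U by subsets and K a finite subset of U (with g^U finite). Then for 1 < p < ∞, C_p(K, Uₙ) is decreasing in n and lim_{n→∞} C_p(K, Uₙ) = C_p(K, U). -/
open scoped ENNReal

/-- The `L^p`-capacity in its equivalent infimum form
`C_p(K,W) = inf{‖f‖_{L^p(W)}^p : f ∈ L_+^p(W), G^W f ≥ 1 on K}`. -/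
noncomputable def capInf {V : Type*} (μ : V → V → ℝ≥0∞) (p : ℝ) (K : Finset V) (W : Set V) :
    ℝ≥0∞ :=
  ⨅ f ∈ {f : V → ℝ≥0∞ | (∀ x, x ∉ W → f x = 0) ∧ ∀ x ∈ K, 1 ≤ greenOp μ W f x},
    ∑' x, W.indicator (fun x => f x ^ p * vertexWeight μ x) x

section Aux

variable {V : Type*} (μ : V → V → ℝ≥0∞)

private lemma tsum_iSup_mono' {α : Type*} (F : ℕ → α → ℝ≥0∞)
    (hF : ∀ a, Monotone (fun n => F n a)) :
    ∑' a, ⨆ n, F n a = ⨆ n, ∑' a, F n a := by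
  refine le_antisymm ?_ (iSup_le fun n => ENNReal.tsum_le_tsum fun a => le_iSup (fun m => F m a) n)
  rw [ENNReal.tsum_eq_iSup_sum]
  refine iSup_le fun s => ?_
  rw [ENNReal.finsetSum_iSup_of_monotone hF]
  exact iSup_mono fun n => ENNReal.sum_le_tsum s

private lemma iSup_mul_iSup_mono' (a b : ℕ → ℝ≥0∞) (ha : Monotone a) (hb : Monotone b) :
    (⨆ n, a n) * (⨆ n, b n) = ⨆ n, a n * b n := by
  refine le_antisymm ?_ (iSup_le fun n => mul_le_mul' (le_iSup a n) (le_iSup b n))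
  rw [ENNReal.iSup_mul]
  refine iSup_le fun i => ?_
  rw [ENNReal.mul_iSup]
  refine iSup_le fun j => ?_
  exact le_iSup_of_le (max i j)
    (mul_le_mul' (ha (le_max_left i j)) (hb (le_max_right i j)))

private lemma killedKer_mono_set {W W' : Set V} (h : W ⊆ W') (x y : V) :
    killedKer μ W x y ≤ killedKer μ W' x y := by
  unfold killedKer
  split_ifs with h1 h2
  · exact le_rfl
  · exact absurd ⟨h h1.1, h h1.2⟩ h2
  · exact zero_le
  · exact le_rfl

private lemma killedKerN_mono_set {W W' : Set V} (h : W ⊆ W') (m : ℕ) (x y : V) :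
    killedKerN μ W m x y ≤ killedKerN μ W' m x y := by
  induction m generalizing x y with
  | zero =>
    simp only [killedKerN]
    split_ifs with h1 h2
    · exact le_rfl
    · exact absurd ⟨h1.1, h h1.2⟩ h2
    · exact zero_le
    · exact le_rfl
  | succ m ih =>
    simp only [killedKerN]
    exact ENNReal.tsum_le_tsum fun z =>
      mul_le_mul' (killedKer_mono_set μ h x z) (ih z y)

private lemma killedKerN_eq_zero {W : Set V} {y : V} (hy : y ∉ W) (m : ℕ) (x : V) :
    killedKerN μ W m x y = 0 := by
  induction m generalizing x with
  | zero =>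
    simp only [killedKerN]
    rw [if_neg]
    rintro ⟨rfl, hx⟩; exact hy hx
  | succ m ih =>
    simp only [killedKerN]
    simp [ih]

private lemma greenKilled_mono_set {W W' : Set V} (h : W ⊆ W') (x y : V) :
    greenKilled μ W x y ≤ greenKilled μ W' x y :=
  ENNReal.tsum_le_tsum fun m =>
    ENNReal.div_le_div_right (killedKerN_mono_set μ h m x y) _

private lemma greenKilled_eq_zero {W : Set V} {y : V} (hy : y ∉ W) (x : V) :
    greenKilled μ W x y = 0 := by
  unfold greenKilled
  simp [killedKerN_eq_zero μ hy]

private lemma greenOp_mono_set {W W' : Set V} (h : W ⊆ W') (f : V → ℝ≥0∞) (x : V) :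
    greenOp μ W f x ≤ greenOp μ W' f x :=
  ENNReal.tsum_le_tsum fun y =>
    mul_le_mul' (mul_le_mul' (greenKilled_mono_set μ h x y) le_rfl) le_rfl

variable {U : Set V} {Un : ℕ → Set V}

private lemma killedKer_iSup (hmono : Monotone Un) (hexh : (⋃ n, Un n) = U) (x y : V) :
    ⨆ n, killedKer μ (Un n) x y = killedKer μ U x y := by
  have hsub : ∀ n, Un n ⊆ U := fun n => hexh ▸ Set.subset_iUnion Un n
  refine le_antisymm (iSup_le fun n => killedKer_mono_set μ (hsub n) x y) ?_
  unfold killedKer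
  split_ifs with h1
  · obtain ⟨i, hi⟩ := Set.mem_iUnion.1 (hexh ▸ h1.1)
    obtain ⟨j, hj⟩ := Set.mem_iUnion.1 (hexh ▸ h1.2)
    refine le_iSup_of_le (max i j) ?_
    rw [if_pos ⟨hmono (le_max_left i j) hi, hmono (le_max_right i j) hj⟩]
  · exact zero_le

private lemma killedKerN_iSup (hmono : Monotone Un) (hexh : (⋃ n, Un n) = U) (m : ℕ) (x y : V) :
    ⨆ n, killedKerN μ (Un n) m x y = killedKerN μ U m x y := by
  have hsub : ∀ n, Un n ⊆ U := fun n => hexh ▸ Set.subset_iUnion Un n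
  induction m generalizing x y with
  | zero =>
    refine le_antisymm (iSup_le fun n => killedKerN_mono_set μ (hsub n) 0 x y) ?_
    simp only [killedKerN]
    split_ifs with h1
    · obtain ⟨i, hi⟩ := Set.mem_iUnion.1 (hexh ▸ h1.2)
      refine le_iSup_of_le i ?_
      rw [if_pos ⟨h1.1, hi⟩]
    · exact zero_le
  | succ m ih =>
    have h1 : ∀ z, Monotone (fun n => killedKer μ (Un n) x z) :=
      fun z a b hab => killedKer_mono_set μ (hmono hab) x z
    have h2 : ∀ z, Monotone (fun n => killedKerN μ (Un n) m z y) :=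
      fun z a b hab => killedKerN_mono_set μ (hmono hab) m z y
    conv_rhs => rw [show (killedKerN μ U (m+1) x y)
      = ∑' z, killedKer μ U x z * killedKerN μ U m z y from rfl]
    have : ∀ z, killedKer μ U x z * killedKerN μ U m z y
        = ⨆ n, killedKer μ (Un n) x z * killedKerN μ (Un n) m z y := by
      intro z
      rw [← killedKer_iSup μ hmono hexh x z, ← ih z y]
      exact iSup_mul_iSup_mono' _ _ (h1 z) (h2 z)
    simp_rw [this]
    rw [tsum_iSup_mono' (fun n z => killedKer μ (Un n) x z * killedKerN μ (Un n) m z y)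
      (fun z a b hab => mul_le_mul' (h1 z hab) (h2 z hab))]
    exact iSup_congr fun n => rfl

private lemma greenKilled_iSup (hmono : Monotone Un) (hexh : (⋃ n, Un n) = U) (x y : V) :
    ⨆ n, greenKilled μ (Un n) x y = greenKilled μ U x y := by
  unfold greenKilled
  rw [← tsum_iSup_mono' (fun n m => killedKerN μ (Un n) m x y / vertexWeight μ y)
    (fun m a b hab => ENNReal.div_le_div_right (killedKerN_mono_set μ (hmono hab) m x y) _)]
  refine tsum_congr fun m => ?_
  rw [← killedKerN_iSup μ hmono hexh m x y, ENNReal.iSup_div]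

private lemma greenOp_iSup (hmono : Monotone Un) (hexh : (⋃ n, Un n) = U) (f : V → ℝ≥0∞)
    (x : V) : ⨆ n, greenOp μ (Un n) f x = greenOp μ U f x := by
  unfold greenOp
  rw [← tsum_iSup_mono' (fun n y => greenKilled μ (Un n) x y * f y * vertexWeight μ y)
    (fun y a b hab => mul_le_mul'
      (mul_le_mul' (greenKilled_mono_set μ (hmono hab) x y) le_rfl) le_rfl)]
  refine tsum_congr fun y => ?_
  rw [← greenKilled_iSup μ hmono hexh x y, ENNReal.iSup_mul, ENNReal.iSup_mul]

private lemma greenOp_const_mul (W : Set V) (c : ℝ≥0∞) (f : V → ℝ≥0∞) (x : V) :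
    greenOp μ W (fun y => c * f y) x = c * greenOp μ W f x := by
  unfold greenOp
  rw [← ENNReal.tsum_mul_left]
  exact tsum_congr fun y => by ring

private lemma greenOp_indicator (W : Set V) (f : V → ℝ≥0∞) (x : V) :
    greenOp μ W (W.indicator f) x = greenOp μ W f x := by
  unfold greenOp
  refine tsum_congr fun y => ?_
  by_cases hy : y ∈ W
  · rw [Set.indicator_of_mem hy]
  · rw [greenKilled_eq_zero μ hy, zero_mul, zero_mul, zero_mul, zero_mul]

private lemma capInf_le_of_subset (p : ℝ) (hp : 0 < p) (K : Finset V) {W W' : Set V}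
    (h : W ⊆ W') : capInf μ p K W' ≤ capInf μ p K W := by
  unfold capInf
  refine le_iInf₂ fun f hf => ?_
  obtain ⟨hf0, hf1⟩ := hf
  have hmem : f ∈ {f : V → ℝ≥0∞ |
      (∀ x, x ∉ W' → f x = 0) ∧ ∀ x ∈ K, 1 ≤ greenOp μ W' f x} :=
    ⟨fun x hx => hf0 x fun hxW => hx (h hxW),
     fun x hx => (hf1 x hx).trans (greenOp_mono_set μ h f x)⟩
  refine (iInf₂_le f hmem).trans (le_of_eq (tsum_congr fun x => ?_))
  by_cases hxW : x ∈ W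
  · rw [Set.indicator_of_mem (h hxW), Set.indicator_of_mem hxW]
  · rw [Set.indicator_of_notMem hxW]
    by_cases hxW' : x ∈ W'
    · rw [Set.indicator_of_mem hxW', hf0 x hxW, ENNReal.zero_rpow_of_pos hp, zero_mul]
    · rw [Set.indicator_of_notMem hxW']

end Aux

/-- for an increasing exhaustion `Uₙ` of `U` and a finite `K ⊆ U`,
`C_p(K,Uₙ)` is decreasing in `n` and tends to `C_p(K,U)`. -/
theorem capInf_exhaustion_limit {V : Type*}
    (μ : V → V → ℝ≥0∞)
    (hsym : ∀ x y, μ x y = μ y x)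
    (hloc : LocallyFinite' μ)
    (hpos : ∀ x, 0 < vertexWeight μ x)
    (hfin : ∀ x, vertexWeight μ x < ⊤)
    (U : Set V)
    (hgU : ∀ x y, greenKilled μ U x y < ⊤)
    (Un : ℕ → Set V) (hmono : Monotone Un) (hexh : (⋃ n, Un n) = U)
    (K : Finset V) (hK : ↑K ⊆ U)
    (p : ℝ) (hp : 1 < p) :
    Antitone (fun n => capInf μ p K (Un n)) ∧
    Filter.Tendsto (fun n => capInf μ p K (Un n)) Filter.atTop (nhds (capInf μ p K U)) := by
  have hp0 : (0:ℝ) < p := lt_trans zero_lt_one hp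
  have hsub : ∀ n, Un n ⊆ U := fun n => hexh ▸ Set.subset_iUnion Un n
  have hanti : Antitone (fun n => capInf μ p K (Un n)) :=
    fun a b hab => capInf_le_of_subset μ p hp0 K (hmono hab)
  refine ⟨hanti, ?_⟩
  have hEq : (⨅ n, capInf μ p K (Un n)) = capInf μ p K U := by
    refine le_antisymm ?_ (le_iInf fun n => capInf_le_of_subset μ p hp0 K (hsub n))
    conv_rhs => rw [capInf]
    refine le_iInf₂ fun f hf => ?_
    obtain ⟨hf0, hf1⟩ := hf
    set E := ∑' x, U.indicator (fun x => f x ^ p * vertexWeight μ x) x with hE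
    -- key claim with constant c_k = 1 + (k+1)⁻¹
    have claim : ∀ k : ℕ, (⨅ n, capInf μ p K (Un n))
        ≤ (1 + ((k:ℝ≥0∞) + 1)⁻¹) ^ p * E := by
      intro k
      set c : ℝ≥0∞ := 1 + ((k:ℝ≥0∞) + 1)⁻¹ with hc
      have hk1 : ((k:ℝ≥0∞) + 1) ≠ 0 := by simp
      have hk2 : ((k:ℝ≥0∞) + 1) ≠ ⊤ := by
        simp [ENNReal.add_ne_top]
      have hc1 : 1 < c := ENNReal.lt_add_right ENNReal.one_ne_top (ENNReal.inv_ne_zero.2 hk2)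
      have hc0 : c ≠ 0 := by
        intro h0
        exact absurd (h0 ▸ hc1) (by simp)
      have hctop : c ≠ ⊤ := by
        rw [hc]
        exact ENNReal.add_ne_top.2 ⟨ENNReal.one_ne_top, ENNReal.inv_ne_top.2 hk1⟩
      have hcinv : c⁻¹ < 1 := ENNReal.inv_lt_one.2 hc1
      -- find a common index N
      have hfind : ∀ x ∈ K, ∃ n, c⁻¹ < greenOp μ (Un n) f x := by
        intro x hx
        have h1 : c⁻¹ < ⨆ n, greenOp μ (Un n) f x := by
          rw [greenOp_iSup μ hmono hexh f x]
          exact lt_of_lt_of_le hcinv (hf1 x hx)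
        exact lt_iSup_iff.1 h1
      classical
      set g : V → ℕ := fun x =>
        if h : ∃ n, c⁻¹ < greenOp μ (Un n) f x then h.choose else 0 with hg
      set N := K.sup g with hNdef
      have hN : ∀ x ∈ K, c⁻¹ < greenOp μ (Un N) f x := by
        intro x hx
        have hex := hfind x hx
        have hspec : c⁻¹ < greenOp μ (Un (g x)) f x := by
          rw [hg]; simp only [dif_pos hex]; exact hex.choose_spec
        exact lt_of_lt_of_le hspec
          (greenOp_mono_set μ (hmono (Finset.le_sup hx)) f x)
      -- the competitor function
      set h0 : V → ℝ≥0∞ := fun x => c * (Un N).indicator f x with hh0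
      have hmem : h0 ∈ {f : V → ℝ≥0∞ |
          (∀ x, x ∉ Un N → f x = 0) ∧ ∀ x ∈ K, 1 ≤ greenOp μ (Un N) f x} := by
        constructor
        · intro x hx
          rw [hh0]
          simp [Set.indicator_of_notMem hx]
        · intro x hx
          have : greenOp μ (Un N) h0 x = c * greenOp μ (Un N) f x := by
            rw [hh0, greenOp_const_mul, greenOp_indicator]
          rw [this, ← ENNReal.mul_inv_cancel hc0 hctop]
          exact mul_le_mul' le_rfl (le_of_lt (hN x hx))
      have step1 : (⨅ n, capInf μ p K (Un n)) ≤ capInf μ p K (Un N) := iInf_le _ N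
      have step2 : capInf μ p K (Un N)
          ≤ ∑' x, (Un N).indicator (fun x => h0 x ^ p * vertexWeight μ x) x := by
        unfold capInf
        exact iInf₂_le h0 hmem
      have step3 : (∑' x, (Un N).indicator (fun x => h0 x ^ p * vertexWeight μ x) x)
          ≤ c ^ p * E := by
        rw [hE, ← ENNReal.tsum_mul_left]
        refine ENNReal.tsum_le_tsum fun x => ?_
        by_cases hx : x ∈ Un N
        · rw [Set.indicator_of_mem hx, Set.indicator_of_mem (hsub N hx)]
          rw [hh0]
          simp only [Set.indicator_of_mem hx]
          rw [ENNReal.mul_rpow_of_nonneg _ _ (le_of_lt hp0), mul_assoc]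
        · rw [Set.indicator_of_notMem hx]
          exact zero_le
      exact step1.trans (step2.trans step3)
    -- pass to the limit k → ∞
    have htend : Filter.Tendsto (fun k : ℕ => (1 + ((k:ℝ≥0∞) + 1)⁻¹) ^ p * E)
        Filter.atTop (nhds E) := by
      have h1 : Filter.Tendsto (fun k : ℕ => ((k:ℝ≥0∞) + 1)⁻¹) Filter.atTop (nhds 0) := by
        have := ENNReal.tendsto_inv_nat_nhds_zero.comp (Filter.tendsto_add_atTop_nat 1)
        convert this using 2 with k
        simp [Function.comp]
      have h2 : Filter.Tendsto (fun k : ℕ => 1 + ((k:ℝ≥0∞) + 1)⁻¹) Filter.atTop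
          (nhds 1) := by
        have := Filter.Tendsto.add (tendsto_const_nhds (x := (1:ℝ≥0∞))) h1
        simpa using this
      have h3 : Filter.Tendsto (fun k : ℕ => (1 + ((k:ℝ≥0∞) + 1)⁻¹) ^ p) Filter.atTop
          (nhds 1) := by
        have := (ENNReal.continuous_rpow_const (y := p)).tendsto 1 |>.comp h2
        simpa [Function.comp_def, ENNReal.one_rpow] using this
      have h4 := ENNReal.Tendsto.mul_const (b := E) h3 (Or.inl one_ne_zero)
      simpa using h4
    exact ge_of_tendsto' htend claim
  rw [← hEq]
  exact tendsto_atTop_iInf hanti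
end

section
/- Let G be a group with finite symmetric generating set S and Cayley graph with weights μ_{xy} = 1/|S| if x^{-1}y ∈ S. If the volume function satisfies the doubling condition V(e, 2n) ≤ C·V(e, n), then the Poincaré inequality holds: for all x₀ ∈ G, every positive integer n, and every f : G → ℝ, ∑_{x ∈ B(x₀,n)} |f(x) − f_B|² ≤ C' n² ∑_{x,y ∈ B(x₀,2n)} μ_{xy} |f(x) − f(y)|², where f_B is the average of f over B(x₀,n). -/
set_option maxHeartbeats 2000000 in
/-- on the Cayley graph of a group `G` with finite symmetric generating
set `S` and edge weights `μ_{xy} = 1/|S|` for `x⁻¹y ∈ S`, volume doubling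
`V(e,2n) ≤ C V(e,n)` implies the Poincaré inequality:
`∑_{x∈B(x₀,n)} |f(x) − f_B|² ≤ C' n² ∑_{x,y∈B(x₀,2n)} μ_{xy} |f(x) − f(y)|²`. -/
theorem cayley_doubling_implies_poincare {G : Type*} [Group G] [DecidableEq G]
    (S : Finset G) (hSne : S.Nonempty)
    (hSsym : ∀ s ∈ S, s⁻¹ ∈ S)
    (hgen : Subgroup.closure (S : Set G) = ⊤)
    (Γ : SimpleGraph G)
    (hΓ : ∀ x y, Γ.Adj x y ↔ x ≠ y ∧ x⁻¹ * y ∈ S)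
    (hball : ∀ (x : G) (n : ℕ), {y : G | Γ.dist x y ≤ n}.Finite)
    (w : G → G → ℝ)
    (hw : ∀ x y, w x y = if x⁻¹ * y ∈ S then 1 / (S.card : ℝ) else 0)
    (C : ℝ)
    (hdoubling : ∀ n : ℕ,
      (((hball 1 (2 * n)).toFinset.card : ℝ)) ≤ C * ((hball 1 n).toFinset.card : ℝ)) :
    ∃ C' : ℝ, 0 < C' ∧
      ∀ (x₀ : G) (n : ℕ), 0 < n → ∀ f : G → ℝ,
        ∑ x ∈ (hball x₀ n).toFinset,
            (f x - (∑ y ∈ (hball x₀ n).toFinset, f y) / ((hball x₀ n).toFinset.card : ℝ)) ^ 2 ≤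
          C' * (n : ℝ) ^ 2 *
            ∑ x ∈ (hball x₀ (2 * n)).toFinset, ∑ y ∈ (hball x₀ (2 * n)).toFinset,
              w x y * (f x - f y) ^ 2 := by
  classical
  -- left multiplication preserves adjacency
  have hadj : ∀ (g a b : G), Γ.Adj a b → Γ.Adj (g * a) (g * b) := by
    intro g a b hab
    rw [hΓ] at hab ⊢
    have h2 : (g * a)⁻¹ * (g * b) = a⁻¹ * b := by group
    exact ⟨by simpa using hab.1, by rw [h2]; exact hab.2⟩
  have hwmap : ∀ (g x y : G) (p : Γ.Walk x y),
      ∃ q : Γ.Walk (g * x) (g * y), q.length = p.length := by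
    intro g x y p
    induction p with
    | nil => exact ⟨.nil, rfl⟩
    | cons h p ih =>
      obtain ⟨q, hq⟩ := ih
      exact ⟨.cons (hadj g _ _ h) q, by simp [hq]⟩
  have htrans : ∀ (g x y : G), Γ.Reachable x y → Γ.Reachable (g * x) (g * y) := by
    rintro g x y ⟨p⟩
    obtain ⟨q, -⟩ := hwmap g x y p
    exact ⟨q⟩
  have hreach1 : ∀ g : G, Γ.Reachable 1 g := by
    intro g
    have hg : g ∈ Subgroup.closure (S : Set G) := hgen ▸ Subgroup.mem_top g
    induction hg using Subgroup.closure_induction with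
    | mem s hs =>
      by_cases h1 : s = 1
      · exact h1 ▸ SimpleGraph.Reachable.refl (G := Γ) 1
      · exact ((hΓ 1 s).mpr ⟨fun h => h1 h.symm, by simpa using hs⟩).reachable
    | one => exact SimpleGraph.Reachable.refl (G := Γ) 1
    | mul a b _ _ ha hb => exact ha.trans (by simpa using htrans a 1 b hb)
    | inv a _ ha => exact (by simpa using htrans a⁻¹ 1 a ha : Γ.Reachable a⁻¹ 1).symm
  have hreach : ∀ x y : G, Γ.Reachable x y := fun x y => (hreach1 x).symm.trans (hreach1 y)
  have hconn : Γ.Connected := ⟨hreach⟩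
  have hdist_le : ∀ (g x y : G), Γ.dist (g * x) (g * y) ≤ Γ.dist x y := by
    intro g x y
    obtain ⟨p, hp⟩ := (hreach x y).exists_walk_length_eq_dist
    obtain ⟨q, hq⟩ := hwmap g x y p
    calc Γ.dist (g * x) (g * y) ≤ q.length := Γ.dist_le _
      _ = Γ.dist x y := by rw [hq, hp]
  have hdist : ∀ (g x y : G), Γ.dist (g * x) (g * y) = Γ.dist x y := by
    intro g x y
    refine le_antisymm (hdist_le g x y) ?_
    have := hdist_le g⁻¹ (g * x) (g * y)
    simpa using this
  have hdist1 : ∀ x y : G, Γ.dist 1 (x⁻¹ * y) = Γ.dist x y := by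
    intro x y
    have := hdist x 1 (x⁻¹ * y)
    simpa using this.symm
  have hmem : ∀ (x₀ : G) (n : ℕ) (y : G),
      y ∈ (hball x₀ n).toFinset ↔ Γ.dist x₀ y ≤ n := by
    intro x₀ n y; simp [Set.Finite.mem_toFinset]
  -- ball cardinality is translation invariant
  have hcard : ∀ (x₀ : G) (n : ℕ),
      (hball x₀ n).toFinset.card = (hball 1 n).toFinset.card := by
    intro x₀ n
    apply Finset.card_bij' (fun y _ => x₀⁻¹ * y) (fun z _ => x₀ * z)
    · intro y hy
      rw [hmem] at hy ⊢
      rwa [hdist1]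
    · intro z hz
      rw [hmem] at hz ⊢
      have h2 := hdist x₀ 1 z
      simp only [mul_one] at h2
      rw [h2]; exact hz
    · intro y _; simp
    · intro z _; simp
  have hCpos : (0 : ℝ) < C := by
    have h0 : (1 : ℝ) ≤ ((hball 1 0).toFinset.card : ℝ) := by
      have : (1 : G) ∈ (hball 1 0).toFinset := by rw [hmem]; simp
      exact_mod_cast Finset.card_pos.mpr ⟨1, this⟩
    have := hdoubling 0
    simp only [Nat.mul_zero] at this
    nlinarith
  have hScard : (0 : ℝ) < (S.card : ℝ) := by exact_mod_cast Finset.card_pos.mpr hSne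
  refine ⟨2 * C * S.card, by positivity, ?_⟩
  intro x₀ n hn f
  set Bn := (hball x₀ n).toFinset with hBndef
  set B2 := (hball x₀ (2*n)).toFinset with hB2def
  set Be := (hball 1 (2*n)).toFinset with hBedef
  have hx₀ : x₀ ∈ Bn := by rw [hBndef, hmem, SimpleGraph.dist_self]; exact Nat.zero_le n
  have hVpos : (0:ℝ) < (Bn.card : ℝ) := by
    exact_mod_cast Finset.card_pos.mpr ⟨x₀, hx₀⟩
  set V : ℝ := (Bn.card : ℝ) with hVdef
  set E : ℝ := ∑ a ∈ B2, ∑ b ∈ B2, (if a⁻¹*b ∈ S then (f a - f b)^2 else 0) with hEdef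
  have hEnonneg : 0 ≤ E := by
    rw [hEdef]
    apply Finset.sum_nonneg; intro a _
    apply Finset.sum_nonneg; intro b _
    split <;> positivity
  have hRHS : ∑ x ∈ B2, ∑ y ∈ B2, w x y * (f x - f y)^2 = E / S.card := by
    rw [hEdef, Finset.sum_div]
    refine Finset.sum_congr rfl fun a _ => ?_
    rw [Finset.sum_div]
    refine Finset.sum_congr rfl fun b _ => ?_
    rw [hw]
    by_cases h : a⁻¹*b ∈ S <;> simp [h] <;> ring
  -- variance identity
  set T : ℝ := ∑ y ∈ Bn, f y with hTdef
  set Q : ℝ := ∑ y ∈ Bn, (f y)^2 with hQdef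
  have hvar : ∑ x ∈ Bn, (f x - T/V)^2
      = (1/(2*V)) * ∑ x ∈ Bn, ∑ y ∈ Bn, (f x - f y)^2 := by
    have expand : ∑ x ∈ Bn, (f x - T/V)^2 = Q - (2*(T/V))*T + V*(T/V)^2 := by
      have h3 : ∀ x ∈ Bn, (f x - T/V)^2 = ((f x)^2 - (2*(T/V))*(f x)) + (T/V)^2 :=
        fun x _ => by ring
      rw [Finset.sum_congr rfl h3, Finset.sum_add_distrib, Finset.sum_sub_distrib,
        ← Finset.mul_sum, Finset.sum_const, nsmul_eq_mul, ← hTdef, ← hQdef, ← hVdef]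
    have h2 : ∑ x ∈ Bn, ∑ y ∈ Bn, (f x - f y)^2 = 2*V*Q - 2*T*T := by
      have hinner : ∀ x ∈ Bn, ∑ y ∈ Bn, (f x - f y)^2
          = (V*((f x)^2) - (2*T)*(f x)) + Q := by
        intro x _
        have h3 : ∀ y ∈ Bn, (f x - f y)^2 = ((f x)^2 - (2*(f x))*(f y)) + (f y)^2 :=
          fun y _ => by ring
        rw [Finset.sum_congr rfl h3, Finset.sum_add_distrib, Finset.sum_sub_distrib,
          ← Finset.mul_sum, Finset.sum_const, nsmul_eq_mul, ← hTdef, ← hQdef, ← hVdef]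
        ring
      rw [Finset.sum_congr rfl hinner, Finset.sum_add_distrib, Finset.sum_sub_distrib,
        ← Finset.mul_sum, ← Finset.mul_sum, Finset.sum_const, nsmul_eq_mul,
        ← hTdef, ← hQdef, ← hVdef]
      ring
    rw [expand, h2]
    field_simp
    ring
  -- distances within the ball
  have hdxy : ∀ x ∈ Bn, ∀ y ∈ Bn, Γ.dist x y ≤ 2*n := by
    intro x hx y hy
    rw [hBndef, hmem] at hx hy
    calc Γ.dist x y ≤ Γ.dist x x₀ + Γ.dist x₀ y := hconn.dist_triangle
      _ ≤ n + n := add_le_add (by rwa [Γ.dist_comm]) hy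
      _ = 2*n := by omega
  -- key per-z estimate
  have hzkey : ∀ z ∈ Be, ∑ x ∈ Bn, (if x*z ∈ Bn then (f x - f (x*z))^2 else 0)
      ≤ (2*(n:ℝ))*((2*(n:ℝ))*E) := by
    intro z hzmem
    rw [hBedef, hmem] at hzmem
    obtain ⟨p, hp⟩ := (hreach 1 z).exists_walk_length_eq_dist
    set d := p.length with hddef
    have hd2n : d ≤ 2*n := by rw [hp]; exact hzmem
    set u : ℕ → G := p.getVert with hudef
    have hu0 : u 0 = 1 := p.getVert_zero
    have hud : u d = z := p.getVert_length
    have huadj : ∀ i < d, Γ.Adj (u i) (u (i+1)) := fun i hi => p.adj_getVert_succ hi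
    have hdist_u : ∀ i, Γ.dist 1 (u i) ≤ i := by
      intro i
      induction i with
      | zero => rw [hu0]; simp
      | succ i ih =>
        by_cases hi : i < d
        · calc Γ.dist 1 (u (i+1)) ≤ Γ.dist 1 (u i) + Γ.dist (u i) (u (i+1)) :=
              hconn.dist_triangle
            _ ≤ i + 1 :=
              add_le_add ih (le_of_eq (SimpleGraph.dist_eq_one_iff_adj.mpr (huadj i hi)))
        · have heq : u (i+1) = u i := by
            rw [hudef, p.getVert_of_length_le (by omega), p.getVert_of_length_le (by omega)]
          rw [heq]; exact le_trans ih (by omega)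
    have hdist_uz : ∀ k i, i + k = d → Γ.dist (u i) z ≤ k := by
      intro k
      induction k with
      | zero =>
        intro i hi
        have heq : u i = z := by rw [show i = d by omega, hud]
        rw [heq]; simp
      | succ k ih =>
        intro i hi
        have hi' : i < d := by omega
        calc Γ.dist (u i) z ≤ Γ.dist (u i) (u (i+1)) + Γ.dist (u (i+1)) z :=
            hconn.dist_triangle
          _ ≤ 1 + k := add_le_add
              (le_of_eq (SimpleGraph.dist_eq_one_iff_adj.mpr (huadj i hi'))) (ih (i+1) (by omega))
          _ = k+1 := by omega
    have hmid : ∀ x ∈ Bn, x*z ∈ Bn → ∀ i ≤ d, x * u i ∈ B2 := by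
      intro x hx hxz i hid
      rw [hBndef, hmem] at hx hxz
      rw [hB2def, hmem]
      have e1 : Γ.dist x (x * u i) = Γ.dist 1 (u i) := by
        have := hdist x 1 (u i); simpa using this
      have e2 : Γ.dist (x*z) (x * u i) = Γ.dist z (u i) := hdist x z (u i)
      have b1 : Γ.dist x₀ (x * u i) ≤ n + i := by
        calc Γ.dist x₀ (x*u i) ≤ Γ.dist x₀ x + Γ.dist x (x*u i) := hconn.dist_triangle
          _ ≤ n + i := add_le_add hx (by rw [e1]; exact hdist_u i)
      have b2 : Γ.dist x₀ (x * u i) ≤ n + (d - i) := by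
        calc Γ.dist x₀ (x*u i) ≤ Γ.dist x₀ (x*z) + Γ.dist (x*z) (x*u i) :=
            hconn.dist_triangle
          _ ≤ n + (d - i) := add_le_add hxz
              (by rw [e2, SimpleGraph.dist_comm]; exact hdist_uz (d-i) i (by omega))
      omega
    have htel : ∀ x : G, (f x - f (x*z))^2
        ≤ (2*(n:ℝ)) * ∑ i ∈ Finset.range d, (f (x*u i) - f (x*u (i+1)))^2 := by
      intro x
      have h0 : f x - f (x*z) = ∑ i ∈ Finset.range d, (f (x*u i) - f (x*u (i+1))) := by
        rw [Finset.sum_range_sub' (fun i => f (x*u i)) d, hu0, hud, mul_one]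
      rw [h0]
      calc (∑ i ∈ Finset.range d, (f (x*u i) - f (x*u (i+1))))^2
          ≤ (Finset.range d).card * ∑ i ∈ Finset.range d, (f (x*u i) - f (x*u (i+1)))^2 :=
            sq_sum_le_card_mul_sum_sq
        _ ≤ (2*(n:ℝ)) * ∑ i ∈ Finset.range d, (f (x*u i) - f (x*u (i+1)))^2 := by
            apply mul_le_mul_of_nonneg_right ?_ (by positivity)
            rw [Finset.card_range]
            exact_mod_cast hd2n
    calc ∑ x ∈ Bn, (if x*z ∈ Bn then (f x - f (x*z))^2 else 0)
        ≤ ∑ x ∈ Bn, (if x*z ∈ Bn then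
            (2*(n:ℝ)) * ∑ i ∈ Finset.range d, (f (x*u i) - f (x*u (i+1)))^2 else 0) := by
          apply Finset.sum_le_sum; intro x _
          split
          · exact htel x
          · exact le_refl 0
      _ = (2*(n:ℝ)) * ∑ i ∈ Finset.range d, ∑ x ∈ Bn,
            (if x*z ∈ Bn then (f (x*u i) - f (x*u (i+1)))^2 else 0) := by
          have h4 : ∀ x ∈ Bn, (if x*z ∈ Bn then
              (2*(n:ℝ)) * ∑ i ∈ Finset.range d, (f (x*u i) - f (x*u (i+1)))^2 else 0)
              = (2*(n:ℝ)) * ∑ i ∈ Finset.range d,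
                (if x*z ∈ Bn then (f (x*u i) - f (x*u (i+1)))^2 else 0) := by
            intro x _
            split
            · rfl
            · simp
          rw [Finset.sum_congr rfl h4, ← Finset.mul_sum, Finset.sum_comm]
      _ ≤ (2*(n:ℝ)) * ∑ i ∈ Finset.range d, E := by
          apply mul_le_mul_of_nonneg_left ?_ (by positivity)
          apply Finset.sum_le_sum
          intro i hi
          rw [Finset.mem_range] at hi
          have hstep : (u i)⁻¹ * u (i+1) ∈ S := ((hΓ _ _).mp (huadj i hi)).2
          calc ∑ x ∈ Bn, (if x*z ∈ Bn then (f (x*u i) - f (x*u (i+1)))^2 else 0)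
              = ∑ x ∈ Bn.filter (fun x => x*z ∈ Bn), (f (x*u i) - f (x*u (i+1)))^2 :=
                (Finset.sum_filter _ _).symm
            _ ≤ ∑ x ∈ Bn.filter (fun x => x*z ∈ Bn),
                  (∑ b ∈ B2, if (x*u i)⁻¹*b ∈ S then (f (x*u i) - f b)^2 else 0) := by
                apply Finset.sum_le_sum; intro x hx
                rw [Finset.mem_filter] at hx
                have hb : x * u (i+1) ∈ B2 := hmid x hx.1 hx.2 (i+1) (by omega)
                have heq : (f (x*u i) - f (x*u (i+1)))^2
                    = (if (x*u i)⁻¹*(x*u (i+1)) ∈ S then (f (x*u i) - f (x*u (i+1)))^2 else 0) := by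
                  rw [if_pos]
                  have h5 : (x*u i)⁻¹*(x*u (i+1)) = (u i)⁻¹ * u (i+1) := by group
                  rw [h5]; exact hstep
                rw [heq]
                exact Finset.single_le_sum (f := fun b => if (x*u i)⁻¹*b ∈ S then (f (x*u i) - f b)^2 else 0)
                  (fun b _ => by split <;> positivity) hb
            _ = ∑ a ∈ (Bn.filter (fun x => x*z ∈ Bn)).image (fun x => x * u i),
                  (∑ b ∈ B2, if a⁻¹*b ∈ S then (f a - f b)^2 else 0) :=
                (Finset.sum_image
                  (f := fun a => ∑ b ∈ B2, if a⁻¹*b ∈ S then (f a - f b)^2 else 0)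
                  (g := fun x => x * u i)
                  (fun x _ y _ h => mul_right_cancel h)).symm
            _ ≤ E := by
                rw [hEdef]
                apply Finset.sum_le_sum_of_subset_of_nonneg
                · intro a ha
                  rw [Finset.mem_image] at ha
                  obtain ⟨x, hx, rfl⟩ := ha
                  rw [Finset.mem_filter] at hx
                  exact hmid x hx.1 hx.2 i (by omega)
                · intro a _ _
                  apply Finset.sum_nonneg; intro b _
                  split <;> positivity
      _ = (2*(n:ℝ)) * ((d:ℝ) * E) := by
          rw [Finset.sum_const, Finset.card_range, nsmul_eq_mul]
      _ ≤ (2*(n:ℝ)) * ((2*(n:ℝ)) * E) := by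
          apply mul_le_mul_of_nonneg_left
            (mul_le_mul_of_nonneg_right ?_ hEnonneg) (by positivity)
          exact_mod_cast hd2n
  -- reindex the double sum over pairs by z = x⁻¹y
  have hsum2 : ∑ x ∈ Bn, ∑ y ∈ Bn, (f x - f y)^2
      ≤ (Be.card : ℝ) * ((2*(n:ℝ))*((2*(n:ℝ))*E)) := by
    have hper : ∀ x ∈ Bn, ∑ y ∈ Bn, (f x - f y)^2
        = ∑ z ∈ Be, (if x*z ∈ Bn then (f x - f (x*z))^2 else 0) := by
      intro x hx
      rw [← Finset.sum_filter]
      refine Finset.sum_nbij' (fun y => x⁻¹*y) (fun z => x*z) ?_ ?_ ?_ ?_ ?_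
      · intro y hy
        rw [Finset.mem_filter]
        constructor
        · rw [hBedef, hmem, hdist1]
          exact hdxy x hx y hy
        · simpa using hy
      · intro z hz
        rw [Finset.mem_filter] at hz
        exact hz.2
      · intro y _; simp
      · intro z _; simp
      · intro y _; simp
    rw [Finset.sum_congr rfl hper, Finset.sum_comm]
    calc ∑ z ∈ Be, ∑ x ∈ Bn, (if x*z ∈ Bn then (f x - f (x*z))^2 else 0)
        ≤ ∑ _z ∈ Be, (2*(n:ℝ))*((2*(n:ℝ))*E) := Finset.sum_le_sum hzkey
      _ = (Be.card : ℝ) * ((2*(n:ℝ))*((2*(n:ℝ))*E)) := by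
          rw [Finset.sum_const, nsmul_eq_mul]
  -- assemble
  rw [hRHS, hvar]
  have hBe_card : (Be.card : ℝ) ≤ C * V := by
    have h6 := hdoubling n
    rw [← hcard x₀ n] at h6
    exact h6
  have h5 : (1/(2*V)) * (∑ x ∈ Bn, ∑ y ∈ Bn, (f x - f y)^2)
      ≤ (1/(2*V)) * ((C*V) * ((2*(n:ℝ))*((2*(n:ℝ))*E))) := by
    apply mul_le_mul_of_nonneg_left ?_ (by positivity)
    refine le_trans hsum2 ?_
    apply mul_le_mul_of_nonneg_right hBe_card (by positivity)
  refine le_trans h5 (le_of_eq ?_)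
  field_simp
end
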